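/- Let M₁ = (X, I₁), M₂ = (X, I₂) be matroids and let k be the maximum cardinality of a common independent set. Then every inclusion-wise maximal common independent set A ∈ I₁ ∩ I₂ satisfies |A| ≥ k/2. -/

import Mathlib

theorem stmt_18 {X : Type*} [Fintype X] [DecidableEq X]
    (M₁ M₂ : Matroid X) (k : ℕ)
    (hmax : ∀ I : Finset X, M₁.Indep ↑I → M₂.Indep ↑I → I.card ≤ k)
    (hexists : ∃ I : Finset X, M₁.Indep ↑I ∧ M₂.Indep ↑I ∧ I.card = k)
    (A : Finset X) (hA₁ : M₁.Indep ↑A) (hA₂ : M₂.Indep ↑A)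
    (hmaximal : ∀ B : Finset X, A ⊆ B → M₁.Indep ↑B → M₂.Indep ↑B → B = A) :
    (k : ℝ) / 2 ≤ A.card := by
  obtain ⟨I, hI₁, hI₂, hIk⟩ := hexists
  -- extend A to a basis of A ∪ I in each matroid
  obtain ⟨B₁, hB₁, hAB₁⟩ := Matroid.Indep.subset_isBasis_of_subset hA₁
    (Set.subset_union_left (t := (I : Set X)))
    (Set.union_subset (Matroid.Indep.subset_ground hA₁) (Matroid.Indep.subset_ground hI₁))
  obtain ⟨B₂, hB₂, hAB₂⟩ := Matroid.Indep.subset_isBasis_of_subset hA₂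
    (Set.subset_union_left (t := (I : Set X)))
    (Set.union_subset (Matroid.Indep.subset_ground hA₂) (Matroid.Indep.subset_ground hI₂))
  -- bases of A ∪ I have size ≥ |I| = k
  have hIB₁ : (I : Set X).ncard ≤ B₁.ncard := by
    obtain ⟨J, hJ, hIJ⟩ := Matroid.Indep.subset_isBasis_of_subset hI₁
      (Set.subset_union_right (s := (A : Set X)))
      (Set.union_subset (Matroid.Indep.subset_ground hA₁) (Matroid.Indep.subset_ground hI₁))
    calc (I : Set X).ncard ≤ J.ncard := Set.ncard_le_ncard hIJ (Set.toFinite J)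
      _ = B₁.ncard := by
        have := hJ.encard_eq_encard hB₁
        rw [Set.ncard_def, Set.ncard_def, this]
  have hIB₂ : (I : Set X).ncard ≤ B₂.ncard := by
    obtain ⟨J, hJ, hIJ⟩ := Matroid.Indep.subset_isBasis_of_subset hI₂
      (Set.subset_union_right (s := (A : Set X)))
      (Set.union_subset (Matroid.Indep.subset_ground hA₂) (Matroid.Indep.subset_ground hI₂))
    calc (I : Set X).ncard ≤ J.ncard := Set.ncard_le_ncard hIJ (Set.toFinite J)
      _ = B₂.ncard := by
        have := hJ.encard_eq_encard hB₂
        rw [Set.ncard_def, Set.ncard_def, this]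
  -- B₁ \ A and B₂ \ A are disjoint, else we could augment A in both matroids
  have hdisj : Disjoint (B₁ \ (A : Set X)) (B₂ \ (A : Set X)) := by
    rw [Set.disjoint_left]
    rintro x ⟨hxB₁, hxA⟩ ⟨hxB₂, -⟩
    have h1 : M₁.Indep ↑(insert x A) := by
      refine Matroid.Indep.subset hB₁.indep ?_
      push_cast
      exact Set.insert_subset hxB₁ hAB₁
    have h2 : M₂.Indep ↑(insert x A) := by
      refine Matroid.Indep.subset hB₂.indep ?_
      push_cast
      exact Set.insert_subset hxB₂ hAB₂
    have heq := hmaximal (insert x A) (Finset.subset_insert x A) h1 h2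
    apply hxA
    rw [← heq]
    exact Finset.mem_insert_self x A
  -- counting
  have hsub₁ : B₁ \ (A : Set X) ⊆ (I : Set X) \ (A : Set X) :=
    fun x hx => ⟨((hB₁.subset hx.1).resolve_left hx.2), hx.2⟩
  have hsub₂ : B₂ \ (A : Set X) ⊆ (I : Set X) \ (A : Set X) :=
    fun x hx => ⟨((hB₂.subset hx.1).resolve_left hx.2), hx.2⟩
  have hc₁ : (B₁ \ (A : Set X)).ncard + A.card = B₁.ncard := by
    rw [← Set.ncard_coe_finset A]
    exact Set.ncard_diff_add_ncard_of_subset hAB₁ (Set.toFinite B₁)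
  have hc₂ : (B₂ \ (A : Set X)).ncard + A.card = B₂.ncard := by
    rw [← Set.ncard_coe_finset A]
    exact Set.ncard_diff_add_ncard_of_subset hAB₂ (Set.toFinite B₂)
  have hun : (B₁ \ (A : Set X)).ncard + (B₂ \ (A : Set X)).ncard ≤ k := by
    rw [← Set.ncard_union_eq hdisj (Set.toFinite _) (Set.toFinite _)]
    calc ((B₁ \ (A : Set X)) ∪ (B₂ \ (A : Set X))).ncard
        ≤ ((I : Set X) \ (A : Set X)).ncard :=
          Set.ncard_le_ncard (Set.union_subset hsub₁ hsub₂) (Set.toFinite _)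
      _ ≤ (I : Set X).ncard := Set.ncard_le_ncard Set.diff_subset (Set.toFinite _)
      _ = k := by rw [Set.ncard_coe_finset]; exact hIk
  have hkI : (I : Set X).ncard = k := by rw [Set.ncard_coe_finset]; exact hIk
  have hk2 : k ≤ 2 * A.card := by omega
  rw [div_le_iff₀ (by norm_num : (0:ℝ) < 2)]
  have : (k : ℝ) ≤ 2 * A.card := by exact_mod_cast hk2
  linarith
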